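/- For every triple of signs (s₂₃, s₂₄, s₃₄) ∈ {1,−1}³ with (s₂₃, s₂₄, s₃₄) ≠ (1,1,1), there exists a vector v = (v₁,v₂,v₃,v₄) ∈ ℝ⁴ such that the symmetric 4×4 matrix M with entries M_{ii} = v_i², M_{1j} = M_{j1} = v₁v_j for j = 2,3,4, and M_{ij} = M_{ji} = s_{ij} v_i v_j for (i,j) ∈ {(2,3),(2,4),(3,4)} has rank at least 3. -/

import Mathlib

open Matrix

/-- If a 4×4 real matrix has a nonzero 3×3 minor, its rank is at least 3. -/
lemma rank_ge_three_of_minor (A : Matrix (Fin 4) (Fin 4) ℝ) (r c : Fin 3 → Fin 4)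
    (h : (A.submatrix r c).det ≠ 0) : 3 ≤ A.rank := by
  have hfac : A.submatrix r c =
      ((1 : Matrix (Fin 4) (Fin 4) ℝ).submatrix r (Equiv.refl (Fin 4))) *
        (A * ((1 : Matrix (Fin 4) (Fin 4) ℝ).submatrix (Equiv.refl (Fin 4)) c)) := by
    rw [Matrix.mul_submatrix_one, Matrix.one_submatrix_mul]
    simp
  have hunit : IsUnit (A.submatrix r c) :=
    (Matrix.isUnit_iff_isUnit_det _).2 (isUnit_iff_ne_zero.2 h)
  have hr : (A.submatrix r c).rank = 3 := by
    rw [Matrix.rank_of_isUnit _ hunit]; simp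
  calc (3 : ℕ) = (A.submatrix r c).rank := hr.symm
    _ ≤ (A * ((1 : Matrix (Fin 4) (Fin 4) ℝ).submatrix (Equiv.refl (Fin 4)) c)).rank := by
        rw [hfac]; exact Matrix.rank_mul_le_right _ _
    _ ≤ A.rank := Matrix.rank_mul_le_left _ _

/-- For every triple of signs `(s₂₃, s₂₄, s₃₄) ∈ {1,−1}³`
different from `(1,1,1)`, there is a vector `v ∈ ℝ⁴` such that the symmetric
4×4 matrix with entries `M_{ii} = v_i²`, `M_{1j} = v₁v_j` for `j = 2,3,4` and
`M_{ij} = s_{ij}v_iv_j` for `(i,j) ∈ {(2,3),(2,4),(3,4)}` has rank at least 3. -/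
theorem scaled_veronese_high_rank (s23 s24 s34 : ℝ)
    (h23 : s23 = 1 ∨ s23 = -1) (h24 : s24 = 1 ∨ s24 = -1)
    (h34 : s34 = 1 ∨ s34 = -1) (hne : ¬(s23 = 1 ∧ s24 = 1 ∧ s34 = 1)) :
    ∃ v : Fin 4 → ℝ,
      3 ≤ (Matrix.of
        ![![v 0 ^ 2, v 0 * v 1, v 0 * v 2, v 0 * v 3],
          ![v 0 * v 1, v 1 ^ 2, s23 * (v 1 * v 2), s24 * (v 1 * v 3)],
          ![v 0 * v 2, s23 * (v 1 * v 2), v 2 ^ 2, s34 * (v 2 * v 3)],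
          ![v 0 * v 3, s24 * (v 1 * v 3), s34 * (v 2 * v 3), v 3 ^ 2]]).rank := by
  refine ⟨![1, 1, 1, 1], ?_⟩
  rcases h23 with h23 | h23
  · rcases h24 with h24 | h24
    · rcases h34 with h34 | h34
      · exact absurd ⟨h23, h24, h34⟩ hne
      · -- s34 = -1 : use rows/cols {0,2,3}
        subst h23; subst h24; subst h34
        apply rank_ge_three_of_minor _ ![0, 2, 3] ![0, 2, 3]
        rw [Matrix.det_fin_three]
        simp [Matrix.det_fin_three, Matrix.submatrix_apply, Matrix.vecHead, Matrix.vecTail]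
        norm_num
    · -- s24 = -1 : use rows/cols {0,1,3}
      subst h24
      apply rank_ge_three_of_minor _ ![0, 1, 3] ![0, 1, 3]
      rw [Matrix.det_fin_three]
      simp [Matrix.det_fin_three, Matrix.submatrix_apply, Matrix.vecHead, Matrix.vecTail]
      norm_num
  · -- s23 = -1 : use rows/cols {0,1,2}
    subst h23
    apply rank_ge_three_of_minor _ ![0, 1, 2] ![0, 1, 2]
    rw [Matrix.det_fin_three]
    simp [Matrix.det_fin_three, Matrix.submatrix_apply, Matrix.vecHead, Matrix.vecTail]
    norm_num
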